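/- arXiv:2503.00299 — 3 statements merged into one kernel-verified Lean document; each statement's English description precedes it below -/
import Mathlib

section
/- Let H_A, H_B ∈ ℝ^{n×n} be symmetric matrices such that min over U ∈ 𝕆^{n×r} of Tr(Uᵀ H_A U) = 0 and Tr(Uᵀ H_A U) ≥ 0, Tr(Uᵀ H_B U) ≥ 0 for all U ∈ 𝕆^{n×r}. If U_* minimizes max{Tr(Uᵀ H_A U), Tr(Uᵀ H_B U)} over 𝕆^{n×r}, and the analogous minimum for H_B is also 0, then Tr(U_*ᵀ H_A U_*) = Tr(U_*ᵀ H_B U_*). -/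
open Matrix BigOperators

lemma choose_t (a g aG gG δ : ℝ) (hδ : 0 < δ)
    (key : g ≠ 0 ∨ (g = 0 ∧ a < 0)) :
    ∃ s c : ℝ, s ^ 2 + c ^ 2 = 1 ∧ s ^ 2 * a + 2 * s * c * g < 0 ∧
      s ^ 2 * aG + 2 * s * c * gG < δ := by
  have hGden : (0:ℝ) < 4 * (|aG| + |gG|) + 1 := by positivity
  obtain ⟨t, ht0, htg, ht2, htG⟩ :
      ∃ t : ℝ, t ≠ 0 ∧ (t * a + (1 - t^2) * g) * t < 0 ∧ |t| ≤ 1/2 ∧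
        |t| * (4 * (|aG| + |gG|) + 1) ≤ δ := by
    rcases key with hg | ⟨hg, ha⟩
    · have hgpos : 0 < |g| := abs_pos.mpr hg
      have hden : (0:ℝ) < 4 * |a| + 1 := by positivity
      set τ : ℝ := min (min (1/2) (|g| / (4 * |a| + 1))) (δ / (4 * (|aG| + |gG|) + 1)) with hτ
      have hτpos : 0 < τ := lt_min (lt_min (by norm_num) (by positivity)) (by positivity)
      set t : ℝ := if 0 < g then -τ else τ with htdef
      have habs : |t| = τ := by
        rw [htdef]; split_ifs <;> simp [abs_of_pos hτpos, abs_neg]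
      have ht12 : |t| ≤ 1/2 := by
        rw [habs]; exact le_trans (min_le_left _ _) (min_le_left _ _)
      have htgneg : t * g < 0 := by
        rw [htdef]; split_ifs with h
        · nlinarith [mul_pos hτpos h]
        · exact mul_neg_of_pos_of_neg hτpos (lt_of_le_of_ne (not_lt.mp h) hg)
      have ht0 : t ≠ 0 := by
        intro h; rw [h, abs_zero] at habs; exact hτpos.ne habs
      refine ⟨t, ht0, ?_, ht12, ?_⟩
      · have htga : |t| * (4 * |a| + 1) ≤ |g| := by
          rw [habs]
          calc τ * (4 * |a| + 1) ≤ (|g| / (4 * |a| + 1)) * (4 * |a| + 1) :=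
                mul_le_mul_of_nonneg_right
                  (le_trans (min_le_left _ _) (min_le_right _ _)) hden.le
            _ = |g| := by field_simp
        have h1 : t^2 * a ≤ |t| * |g| / 4 := by
          have ha1 : t^2 * a ≤ t^2 * |a| :=
            mul_le_mul_of_nonneg_left (le_abs_self a) (sq_nonneg t)
          have h2 : t^2 * |a| = |t| * (|t| * |a|) := by rw [pow_two t, ← abs_mul_abs_self t]; ring
          have h3 : |t| * |a| ≤ |g| / 4 := by nlinarith [abs_nonneg t, abs_nonneg a]
          nlinarith [abs_nonneg t]
        have htgabs : |t| * |g| = -(t * g) := by rw [← abs_mul]; exact abs_of_neg htgneg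
        have h4 : (1 - t^2) * (t * g) ≤ (3/4) * (t * g) := by
          have ht14 : t^2 ≤ 1/4 := by nlinarith [abs_mul_abs_self t, abs_nonneg t]
          nlinarith [htgneg]
        nlinarith [h1, h4, htgneg, htgabs]
      · rw [habs]
        calc τ * (4 * (|aG| + |gG|) + 1)
            ≤ (δ / (4 * (|aG| + |gG|) + 1)) * (4 * (|aG| + |gG|) + 1) :=
              mul_le_mul_of_nonneg_right (min_le_right _ _) hGden.le
          _ = δ := by field_simp
    · set τ : ℝ := min (1/2) (δ / (4 * (|aG| + |gG|) + 1)) with hτ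
      have hτpos : 0 < τ := lt_min (by norm_num) (by positivity)
      refine ⟨τ, hτpos.ne', ?_, ?_, ?_⟩
      · rw [hg]; nlinarith [mul_neg_of_neg_of_pos ha (mul_pos hτpos hτpos)]
      · rw [abs_of_pos hτpos]; exact min_le_left _ _
      · rw [abs_of_pos hτpos]
        calc τ * (4 * (|aG| + |gG|) + 1)
            ≤ (δ / (4 * (|aG| + |gG|) + 1)) * (4 * (|aG| + |gG|) + 1) :=
              mul_le_mul_of_nonneg_right (min_le_right _ _) hGden.le
          _ = δ := by field_simp
  have h1t : (0:ℝ) < 1 + t^2 := by positivity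
  have htpos : 0 < |t| := abs_pos.mpr ht0
  set s : ℝ := 2*t/(1+t^2) with hs
  set c : ℝ := (1-t^2)/(1+t^2) with hc
  refine ⟨s, c, by rw [hs, hc]; field_simp; ring, ?_, ?_⟩
  · have heq : s^2 * a + 2*s*c*g = 4 * ((t * a + (1 - t^2) * g) * t) / (1+t^2)^2 := by
      rw [hs, hc]; field_simp; ring
    rw [heq]
    apply div_neg_of_neg_of_pos (by linarith) (by positivity)
  · have hs2 : s^2 ≤ 4*t^2 := by
      rw [hs, div_pow]
      calc (2*t)^2 / (1+t^2)^2 ≤ (2*t)^2 / 1 :=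
            div_le_div_of_nonneg_left (by positivity) (by norm_num) (by nlinarith)
        _ = 4*t^2 := by ring
    have hsabs : |s| ≤ 2 * |t| := by
      rw [hs, abs_div, abs_of_pos h1t]
      calc |2*t| / (1+t^2) ≤ |2*t| / 1 :=
            div_le_div_of_nonneg_left (abs_nonneg _) (by norm_num) (by nlinarith)
        _ = 2 * |t| := by rw [div_one, abs_mul]; norm_num
    have hcabs : |c| ≤ 1 := by
      rw [hc, abs_div, abs_of_pos h1t, div_le_one h1t]
      exact abs_le.mpr ⟨by nlinarith, by nlinarith⟩
    have e1 : s^2 * aG ≤ 4*t^2 * |aG| := by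
      calc s^2 * aG ≤ s^2 * |aG| :=
            mul_le_mul_of_nonneg_left (le_abs_self aG) (sq_nonneg s)
        _ ≤ 4*t^2 * |aG| := mul_le_mul_of_nonneg_right hs2 (abs_nonneg aG)
    have e2 : 2*s*c*gG ≤ 4 * |t| * |gG| := by
      calc 2*s*c*gG ≤ |2*s*c*gG| := le_abs_self _
        _ = 2 * (|s| * (|c| * |gG|)) := by
            rw [abs_mul, abs_mul, abs_mul]; rw [abs_two]; ring
        _ ≤ 2 * ((2 * |t|) * (1 * |gG|)) := by
            apply mul_le_mul_of_nonneg_left _ (by norm_num)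
            apply mul_le_mul hsabs
              (mul_le_mul_of_nonneg_right hcabs (abs_nonneg gG))
              (by positivity) (by positivity)
        _ = 4 * |t| * |gG| := by ring
    have e3 : 4*t^2 * |aG| ≤ 2 * |t| * |aG| := by
      have ht2' : t^2 ≤ |t|/2 := by nlinarith [abs_mul_abs_self t, abs_nonneg t, ht2]
      have := mul_le_mul_of_nonneg_right ht2' (abs_nonneg aG)
      linarith
    have htG' : 4 * (|t| * |aG|) + 4 * (|t| * |gG|) + |t| ≤ δ := by linarith [htG]
    clear_value s c
    linarith [e1, e2, e3, htG', htpos, mul_nonneg (abs_nonneg t) (abs_nonneg aG)]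

variable {n r : ℕ}

lemma rot_stiefel (U : Matrix (Fin n) (Fin r) ℝ) (C : Matrix (Fin r) (Fin 1) ℝ)
    (V : Matrix (Fin n) (Fin 1) ℝ) (s c : ℝ)
    (hU : Uᵀ * U = 1) (hC : Cᵀ * C = 1) (hV : Vᵀ * V = 1) (hUV : Uᵀ * V = 0)
    (hsc : s ^ 2 + c ^ 2 = 1) :
    (U + ((c - 1) • (U * C) + s • V) * Cᵀ)ᵀ * (U + ((c - 1) • (U * C) + s • V) * Cᵀ) = 1 := by
  have hVU : Vᵀ * U = 0 := by
    have : Vᵀ * U = (Uᵀ * V)ᵀ := by rw [transpose_mul, transpose_transpose]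
    rw [this, hUV, transpose_zero]
  have h1 : ∀ X : Matrix (Fin r) (Fin r) ℝ, Uᵀ * (U * X) = X := fun X => by
    rw [← Matrix.mul_assoc, hU, Matrix.one_mul]
  have h2 : ∀ X : Matrix (Fin r) (Fin r) ℝ, Vᵀ * (U * X) = 0 := fun X => by
    rw [← Matrix.mul_assoc, hVU, Matrix.zero_mul]
  have h3 : ∀ X : Matrix (Fin 1) (Fin r) ℝ, Uᵀ * (V * X) = 0 := fun X => by
    rw [← Matrix.mul_assoc, hUV, Matrix.zero_mul]
  have h4 : ∀ X : Matrix (Fin 1) (Fin r) ℝ, Vᵀ * (V * X) = X := fun X => by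
    rw [← Matrix.mul_assoc, hV, Matrix.one_mul]
  have h5 : ∀ X : Matrix (Fin 1) (Fin r) ℝ, Cᵀ * (C * X) = X := fun X => by
    rw [← Matrix.mul_assoc, hC, Matrix.one_mul]
  simp only [transpose_add, transpose_mul, transpose_smul, transpose_transpose,
    Matrix.mul_add, Matrix.add_mul, Matrix.smul_mul, Matrix.mul_smul, Matrix.mul_assoc,
    hU, hC, hV, hUV, hVU, h1, h2, h3, h4, h5, Matrix.mul_zero, Matrix.zero_mul,
    Matrix.mul_one, Matrix.one_mul, smul_zero, add_zero, zero_add]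
  match_scalars <;> nlinarith [hsc]

variable {n r : ℕ}

lemma rot_trace (H : Matrix (Fin n) (Fin n) ℝ) (hH : H.IsSymm)
    (U : Matrix (Fin n) (Fin r) ℝ) (C : Matrix (Fin r) (Fin 1) ℝ)
    (V : Matrix (Fin n) (Fin 1) ℝ) (s c : ℝ)
    (hU : Uᵀ * U = 1) (hC : Cᵀ * C = 1) (hUV : Uᵀ * V = 0)
    (hsc : s ^ 2 + c ^ 2 = 1) :
    Matrix.trace ((U + ((c - 1) • (U * C) + s • V) * Cᵀ)ᵀ * H *
        (U + ((c - 1) • (U * C) + s • V) * Cᵀ)) =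
      Matrix.trace (Uᵀ * H * U)
        + s ^ 2 * (Matrix.trace (Vᵀ * (H * V)) - Matrix.trace (Cᵀ * (Uᵀ * (H * (U * C)))))
        + 2 * s * c * Matrix.trace (Vᵀ * (H * (U * C))) := by
  have hsym : Matrix.trace (Cᵀ * (Uᵀ * (H * V))) = Matrix.trace (Vᵀ * (H * (U * C))) := by
    rw [← Matrix.trace_transpose (Cᵀ * (Uᵀ * (H * V)))]
    congr 1
    simp only [transpose_mul, transpose_transpose, hH.eq]
    rw [← Matrix.mul_assoc, ← Matrix.mul_assoc]
  have e1 : (C * (Cᵀ * (Uᵀ * (H * U)))).trace = (Cᵀ * (Uᵀ * (H * (U * C)))).trace := by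
    rw [Matrix.trace_mul_comm]; simp only [Matrix.mul_assoc]
  have e2 : (C * (Vᵀ * (H * U))).trace = (Vᵀ * (H * (U * C))).trace := by
    rw [Matrix.trace_mul_comm]; simp only [Matrix.mul_assoc]
  have e3 : (Uᵀ * (H * (U * (C * Cᵀ)))).trace = (Cᵀ * (Uᵀ * (H * (U * C)))).trace := by
    rw [show Uᵀ * (H * (U * (C * Cᵀ))) = (Uᵀ * (H * (U * C))) * Cᵀ by
      simp only [Matrix.mul_assoc], Matrix.trace_mul_comm]
  have e4 : (C * (Cᵀ * (Uᵀ * (H * (U * (C * Cᵀ)))))).trace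
      = (Cᵀ * (Uᵀ * (H * (U * C)))).trace := by
    rw [Matrix.trace_mul_comm]
    simp only [Matrix.mul_assoc, hC, Matrix.mul_one]
  have e5 : (C * (Vᵀ * (H * (U * (C * Cᵀ))))).trace = (Vᵀ * (H * (U * C))).trace := by
    rw [Matrix.trace_mul_comm]
    simp only [Matrix.mul_assoc, hC, Matrix.mul_one]
  have e6 : (Uᵀ * (H * (V * Cᵀ))).trace = (Vᵀ * (H * (U * C))).trace := by
    rw [show Uᵀ * (H * (V * Cᵀ)) = (Uᵀ * (H * V)) * Cᵀ by
      simp only [Matrix.mul_assoc], Matrix.trace_mul_comm, ← hsym]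
  have e7 : (C * (Cᵀ * (Uᵀ * (H * (V * Cᵀ))))).trace = (Vᵀ * (H * (U * C))).trace := by
    rw [Matrix.trace_mul_comm]
    simp only [Matrix.mul_assoc, hC, Matrix.mul_one]
    exact hsym
  have e8 : (C * (Vᵀ * (H * (V * Cᵀ)))).trace = (Vᵀ * (H * V)).trace := by
    rw [Matrix.trace_mul_comm]
    simp only [Matrix.mul_assoc, hC, Matrix.mul_one]
  simp only [transpose_add, transpose_mul, transpose_smul, transpose_transpose,
    Matrix.mul_add, Matrix.add_mul, Matrix.smul_mul, Matrix.mul_smul, Matrix.mul_assoc,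
    trace_add, trace_smul, smul_eq_mul, e1, e2, e3, e4, e5, e6, e7, e8]
  linear_combination (Cᵀ * (Uᵀ * (H * (U * C)))).trace * hsc

-- trace of PSD matrix is nonneg
lemma psd_trace_nonneg {m : ℕ} {X : Matrix (Fin m) (Fin m) ℝ} (hX : X.PosSemidef) :
    0 ≤ X.trace := by
  rw [Matrix.trace]
  apply Finset.sum_nonneg
  intro i _
  have := hX.dotProduct_mulVec_nonneg (Pi.single i 1)
  simpa [dotProduct, Matrix.mulVec, Pi.single_apply, Matrix.diag] using this

-- trace of product of two PSD matrices is nonneg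
lemma psd_trace_mul_nonneg {m : ℕ} {X Y : Matrix (Fin m) (Fin m) ℝ}
    (hX : X.PosSemidef) (hY : Y.PosSemidef) : 0 ≤ (X * Y).trace := by
  obtain ⟨B, rfl⟩ : ∃ B : Matrix (Fin m) (Fin m) ℝ, X = Bᴴ * B := by
    open scoped MatrixOrder in
    exact CStarAlgebra.nonneg_iff_eq_star_mul_self.mp hX.nonneg
  rw [Matrix.mul_assoc, Matrix.trace_mul_comm]
  exact psd_trace_nonneg (hY.mul_mul_conjTranspose_same B)

lemma one_sub_self_mul_transpose_psd {p q : ℕ} (A : Matrix (Fin p) (Fin q) ℝ)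
    (h : ((1 : Matrix (Fin q) (Fin q) ℝ) - Aᵀ * A).PosSemidef) :
    ((1 : Matrix (Fin p) (Fin p) ℝ) - A * Aᵀ).PosSemidef := by
  refine Matrix.PosSemidef.of_dotProduct_mulVec_nonneg ?_ ?_
  · unfold Matrix.IsHermitian
    rw [conjTranspose_sub, conjTranspose_one, conjTranspose_mul,
      conjTranspose_eq_transpose_of_trivial, conjTranspose_eq_transpose_of_trivial,
      transpose_transpose]
  · intro x
    have hsx : star x = x := by simp
    rw [hsx, sub_mulVec, dotProduct_sub, one_mulVec]
    set y : Fin q → ℝ := Aᵀ *ᵥ x with hy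
    have key : x ⬝ᵥ ((A * Aᵀ) *ᵥ x) = y ⬝ᵥ y := by
      rw [← Matrix.mulVec_mulVec, ← hy,
        dotProduct_mulVec x A y, ← Matrix.mulVec_transpose, ← hy]
    rw [key]
    have h1 : (A *ᵥ y) ⬝ᵥ (A *ᵥ y) ≤ y ⬝ᵥ y := by
      have h0 := h.dotProduct_mulVec_nonneg y
      rw [show star y = y by simp, sub_mulVec, dotProduct_sub, one_mulVec,
        ← Matrix.mulVec_mulVec] at h0
      have h2 : y ⬝ᵥ (Aᵀ *ᵥ (A *ᵥ y)) = (A *ᵥ y) ⬝ᵥ (A *ᵥ y) := by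
        rw [dotProduct_mulVec y Aᵀ, Matrix.vecMul_transpose]
      linarith [h2 ▸ h0]
    have hxy : x ⬝ᵥ (A *ᵥ y) = y ⬝ᵥ y := by
      rw [dotProduct_mulVec x A y, ← Matrix.mulVec_transpose, ← hy]
    have hCS : (x ⬝ᵥ (A *ᵥ y)) ^ 2 ≤ (x ⬝ᵥ x) * ((A *ᵥ y) ⬝ᵥ (A *ᵥ y)) := by
      simpa [dotProduct, pow_two, Finset.sum_mul_sum] using
        Finset.sum_mul_sq_le_sq_mul_sq Finset.univ x (A *ᵥ y)
    have hyy : 0 ≤ y ⬝ᵥ y := by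
      simpa using dotProduct_self_star_nonneg y
    have hxx : 0 ≤ x ⬝ᵥ x := by
      simpa using dotProduct_self_star_nonneg x
    rcases eq_or_lt_of_le hyy with h0 | h0
    · linarith
    · nlinarith [hCS, h1, hxy, h0, hxx]

-- turn a euclidean vector into a column matrix
noncomputable def colM {m : ℕ} (v : Fin m → ℝ) : Matrix (Fin m) (Fin 1) ℝ :=
  Matrix.of fun i _ => v i

lemma colM_transpose_mul_colM {m : ℕ} (v w : Fin m → ℝ) :
    (colM v)ᵀ * colM w = Matrix.of fun _ _ => v ⬝ᵥ w := by
  ext a b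
  simp [colM, Matrix.mul_apply, dotProduct]

lemma mul_colM {m k : ℕ} (M : Matrix (Fin k) (Fin m) ℝ) (v : Fin m → ℝ) :
    M * colM v = colM (M *ᵥ v) := by
  ext i a
  simp [colM, Matrix.mul_apply, Matrix.mulVec, dotProduct]

lemma colM_smul {m : ℕ} (a : ℝ) (v : Fin m → ℝ) : colM (a • v) = a • colM v := by
  ext i b; simp [colM]

-- unit eigenvector facts for an orthonormal-basis eigenvector
lemma eigencol {m : ℕ} {M : Matrix (Fin m) (Fin m) ℝ} (hM : M.IsHermitian) (i : Fin m) :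
    (colM (hM.eigenvectorBasis i))ᵀ * colM (hM.eigenvectorBasis i) = 1 ∧
    M * colM (hM.eigenvectorBasis i) = hM.eigenvalues i • colM (hM.eigenvectorBasis i) := by
  constructor
  · rw [colM_transpose_mul_colM]
    ext a b
    have h1 : (hM.eigenvectorBasis i : EuclideanSpace ℝ (Fin m)) ⬝ᵥ
        (hM.eigenvectorBasis i : EuclideanSpace ℝ (Fin m)) = 1 := by
      have := hM.eigenvectorBasis.orthonormal.1 i
      have h2 : (inner ℝ (hM.eigenvectorBasis i) (hM.eigenvectorBasis i) : ℝ) = 1 := by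
        rw [real_inner_self_eq_norm_sq, this]; norm_num
      rw [← h2]
      simp only [PiLp.inner_apply, RCLike.inner_apply, conj_trivial, dotProduct, mul_comm]
    simp [h1, Matrix.one_apply, Subsingleton.elim a b]
  · rw [mul_colM, ← colM_smul]
    exact congrArg colM (hM.mulVec_eigenvectorBasis i)

lemma isHermitian_of_isSymm' {m : ℕ} {M : Matrix (Fin m) (Fin m) ℝ} (h : M.IsSymm) :
    M.IsHermitian := by
  rw [Matrix.IsHermitian, conjTranspose_eq_transpose_of_trivial]; exact h

-- p1: max eigenvalue
lemma exists_max_eigen {m : ℕ} (hm : 0 < m) (M : Matrix (Fin m) (Fin m) ℝ) (hM : M.IsSymm) :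
    ∃ (C : Matrix (Fin m) (Fin 1) ℝ) (μ : ℝ), Cᵀ * C = 1 ∧ M * C = μ • C ∧
      (μ • (1 : Matrix (Fin m) (Fin m) ℝ) - M).PosSemidef := by
  haveI : Nonempty (Fin m) := ⟨⟨0, hm⟩⟩
  have hM' : M.IsHermitian := isHermitian_of_isSymm' hM
  obtain ⟨i₀, hmax⟩ := Finite.exists_max hM'.eigenvalues
  refine ⟨colM (hM'.eigenvectorBasis i₀), hM'.eigenvalues i₀,
    (eigencol hM' i₀).1, (eigencol hM' i₀).2, ?_⟩
  -- μ•1 - M = W * (μ•1 - D) * Wᴴ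
  set μ := hM'.eigenvalues i₀ with hμ
  set W : Matrix (Fin m) (Fin m) ℝ := (hM'.eigenvectorUnitary : Matrix (Fin m) (Fin m) ℝ) with hW
  have hWW : W * Wᴴ = 1 := by
    rw [hW, ← Matrix.star_eq_conjTranspose]
    exact Unitary.mul_star_self_of_mem hM'.eigenvectorUnitary.2
  have hD : (μ • (1 : Matrix (Fin m) (Fin m) ℝ)
      - diagonal (RCLike.ofReal ∘ hM'.eigenvalues)).PosSemidef := by
    have : μ • (1 : Matrix (Fin m) (Fin m) ℝ) - diagonal (RCLike.ofReal ∘ hM'.eigenvalues)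
        = diagonal (fun i => μ - hM'.eigenvalues i) := by
      rw [smul_one_eq_diagonal]
      rw [diagonal_sub]
      congr 1
    rw [this]
    exact Matrix.PosSemidef.diagonal (fun i => by simpa using hmax i)
  have key : μ • (1 : Matrix (Fin m) (Fin m) ℝ) - M
      = W * (μ • (1 : Matrix (Fin m) (Fin m) ℝ) - diagonal (RCLike.ofReal ∘ hM'.eigenvalues)) * Wᴴ := by
    rw [Matrix.mul_sub, Matrix.sub_mul]
    have h1 : W * (μ • (1 : Matrix (Fin m) (Fin m) ℝ)) * Wᴴ = μ • (1 : Matrix (Fin m) (Fin m) ℝ) := by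
      rw [Matrix.mul_smul, Matrix.mul_one, Matrix.smul_mul, hWW]
    rw [h1]
    congr 1
    have := hM'.spectral_theorem
    rw [← Matrix.star_eq_conjTranspose]
    exact this
  rw [key]
  exact hD.mul_mul_conjTranspose_same W

lemma psd_or_neg_eigen {m : ℕ} (T : Matrix (Fin m) (Fin m) ℝ) (hT : T.IsSymm) :
    T.PosSemidef ∨ ∃ (V : Matrix (Fin m) (Fin 1) ℝ) (lam : ℝ),
      Vᵀ * V = 1 ∧ T * V = lam • V ∧ lam < 0 := by
  have hT' : T.IsHermitian := isHermitian_of_isSymm' hT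
  by_cases h : ∀ i, 0 ≤ hT'.eigenvalues i
  · exact Or.inl (hT'.posSemidef_iff_eigenvalues_nonneg.mpr h)
  · push_neg at h
    obtain ⟨i, hi⟩ := h
    exact Or.inr ⟨colM (hT'.eigenvectorBasis i), hT'.eigenvalues i,
      (eigencol hT' i).1, (eigencol hT' i).2, hi⟩

lemma descent_step {n r : ℕ} (H G : Matrix (Fin n) (Fin n) ℝ) (hH : H.IsSymm) (hG : G.IsSymm)
    (U : Matrix (Fin n) (Fin r) ℝ) (hU : Uᵀ * U = 1)
    (C : Matrix (Fin r) (Fin 1) ℝ) (V : Matrix (Fin n) (Fin 1) ℝ)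
    (hC : Cᵀ * C = 1) (hV : Vᵀ * V = 1) (hUV : Uᵀ * V = 0)
    (key : Matrix.trace (Vᵀ * (H * (U * C))) ≠ 0 ∨
      (Matrix.trace (Vᵀ * (H * (U * C))) = 0 ∧
        Matrix.trace (Vᵀ * (H * V)) < Matrix.trace (Cᵀ * (Uᵀ * (H * (U * C))))))
    (δ : ℝ) (hδ : 0 < δ) :
    ∃ U' : Matrix (Fin n) (Fin r) ℝ, U'ᵀ * U' = 1 ∧
      Matrix.trace (U'ᵀ * H * U') < Matrix.trace (Uᵀ * H * U) ∧
      Matrix.trace (U'ᵀ * G * U') < Matrix.trace (Uᵀ * G * U) + δ := by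
  obtain ⟨s, c, hsc, hHe, hGe⟩ := choose_t
    (Matrix.trace (Vᵀ * (H * V)) - Matrix.trace (Cᵀ * (Uᵀ * (H * (U * C)))))
    (Matrix.trace (Vᵀ * (H * (U * C))))
    (Matrix.trace (Vᵀ * (G * V)) - Matrix.trace (Cᵀ * (Uᵀ * (G * (U * C)))))
    (Matrix.trace (Vᵀ * (G * (U * C)))) δ hδ
    (by rcases key with h | ⟨h1, h2⟩
        · exact Or.inl h
        · exact Or.inr ⟨h1, by linarith⟩)
  refine ⟨U + ((c - 1) • (U * C) + s • V) * Cᵀ, rot_stiefel U C V s c hU hC hV hUV hsc, ?_, ?_⟩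
  · rw [rot_trace H hH U C V s c hU hC hUV hsc]; linarith
  · rw [rot_trace G hG U C V s c hU hC hUV hsc]; linarith

lemma one_by_one_eq (X : Matrix (Fin 1) (Fin 1) ℝ) : X = X.trace • 1 := by
  ext a b
  fin_cases a; fin_cases b
  simp [Matrix.trace]

lemma col_norm_pos {m : ℕ} {X : Matrix (Fin m) (Fin 1) ℝ} (hX : X ≠ 0) :
    0 < (Xᵀ * X).trace := by
  have h : (Xᵀ * X).trace = ∑ i, X i 0 ^ 2 := by
    simp [Matrix.trace, Matrix.diag, Matrix.mul_apply, pow_two, Fin.sum_univ_one]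
  rw [h]
  obtain ⟨i, j, hij⟩ : ∃ i j, X i j ≠ 0 := by
    by_contra hc; push_neg at hc
    exact hX (by ext i j; simp [hc])
  have hj : j = 0 := Subsingleton.elim _ _
  apply Finset.sum_pos' (fun i _ => sq_nonneg _)
  have hX0 : X i 0 ≠ 0 := hj ▸ hij
  exact ⟨i, Finset.mem_univ i, by positivity⟩

lemma descent {n r : ℕ} (H G : Matrix (Fin n) (Fin n) ℝ) (hH : H.IsSymm) (hG : G.IsSymm)
    (U : Matrix (Fin n) (Fin r) ℝ) (hU : Uᵀ * U = 1)
    (V₀ : Matrix (Fin n) (Fin r) ℝ) (hV₀ : V₀ᵀ * V₀ = 1)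
    (hlt : Matrix.trace (V₀ᵀ * H * V₀) < Matrix.trace (Uᵀ * H * U))
    (δ : ℝ) (hδ : 0 < δ) :
    ∃ U' : Matrix (Fin n) (Fin r) ℝ, U'ᵀ * U' = 1 ∧
      Matrix.trace (U'ᵀ * H * U') < Matrix.trace (Uᵀ * H * U) ∧
      Matrix.trace (U'ᵀ * G * U') < Matrix.trace (Uᵀ * G * U) + δ := by
  rcases Nat.eq_zero_or_pos r with hr | hr
  · subst hr
    simp [Matrix.trace] at hlt
  set M : Matrix (Fin r) (Fin r) ℝ := Uᵀ * (H * U) with hM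
  have htr : Matrix.trace (Uᵀ * H * U) = M.trace := by rw [hM, Matrix.mul_assoc]
  set K : Matrix (Fin n) (Fin r) ℝ := H * U - U * M with hK
  have hUK : Uᵀ * K = 0 := by
    rw [hK, Matrix.mul_sub, ← Matrix.mul_assoc Uᵀ U M, hU, Matrix.one_mul, ← hM, sub_self]
  by_cases hKz : K = 0
  · -- invariant subspace case
    have hHU : H * U = U * M := by rwa [hK, sub_eq_zero] at hKz
    have hMsymm : M.IsSymm := by
      rw [Matrix.IsSymm, hM, transpose_mul, transpose_mul, hH.eq, transpose_transpose,
        Matrix.mul_assoc]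
    obtain ⟨C, μ, hCC, hMC, hPSD⟩ := exists_max_eigen hr M hMsymm
    have hHUC : H * (U * C) = μ • (U * C) := by
      rw [← Matrix.mul_assoc, hHU, Matrix.mul_assoc, hMC, Matrix.mul_smul]
    have hα : Matrix.trace (Cᵀ * (Uᵀ * (H * (U * C)))) = μ := by
      rw [hHUC, Matrix.mul_smul, ← Matrix.mul_assoc, hU, Matrix.one_mul, Matrix.mul_smul, hCC]
      simp [Matrix.trace]
    set P : Matrix (Fin n) (Fin n) ℝ := 1 - U * Uᵀ with hP
    have hPt : Pᵀ = P := by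
      rw [hP, transpose_sub, transpose_one, transpose_mul, transpose_transpose]
    have hUP : Uᵀ * P = 0 := by
      rw [hP, Matrix.mul_sub, Matrix.mul_one, ← Matrix.mul_assoc, hU, Matrix.one_mul, sub_self]
    have hPU : P * U = 0 := by
      rw [hP, Matrix.sub_mul, Matrix.one_mul, Matrix.mul_assoc, hU, Matrix.mul_one, sub_self]
    have hPP : P * P = P := by
      rw [hP, Matrix.sub_mul, Matrix.one_mul]
      rw [show (U * Uᵀ) * (1 - U * Uᵀ) = U * (Uᵀ * (1 - U * Uᵀ)) from Matrix.mul_assoc _ _ _]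
      rw [show Uᵀ * ((1 : Matrix (Fin n) (Fin n) ℝ) - U * Uᵀ) = 0 from hUP]
      rw [Matrix.mul_zero, sub_zero]
    set T : Matrix (Fin n) (Fin n) ℝ := P * (H * P) - μ • P with hT
    have hTsymm : T.IsSymm := by
      rw [Matrix.IsSymm, hT, transpose_sub, transpose_smul, hPt, transpose_mul, transpose_mul,
        hPt, hH.eq, Matrix.mul_assoc]
    have hPT : P * T = T := by
      rw [hT, Matrix.mul_sub, Matrix.mul_smul, hPP, ← Matrix.mul_assoc, hPP]
    rcases psd_or_neg_eigen T hTsymm with hTpsd | ⟨V, lam, hVV, hTV, hlam⟩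
    · -- PSD case: contradiction with hlt
      exfalso
      set A : Matrix (Fin r) (Fin r) ℝ := Uᵀ * V₀ with hA
      have hVA : V₀ᵀ * U = Aᵀ := by rw [hA, transpose_mul, transpose_transpose]
      -- H = U * (M * Uᵀ) + (T + μ • P)
      have hTP : T + μ • P = P * (H * P) := by rw [hT, sub_add_cancel]
      have hUtH : Uᵀ * H = M * Uᵀ := by
        have h1 : Uᵀ * H = (H * U)ᵀ := by rw [transpose_mul, hH.eq]
        rw [h1, hHU, transpose_mul, hMsymm.eq]
      have hdecomp : H = U * (M * Uᵀ) + (T + μ • P) := by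
        rw [hTP]
        have h1 : (1 : Matrix (Fin n) (Fin n) ℝ) = U * Uᵀ + P := by rw [hP]; abel
        calc H = 1 * (H * 1) := by rw [Matrix.one_mul, Matrix.mul_one]
          _ = (U * Uᵀ + P) * (H * (U * Uᵀ + P)) := by rw [← h1]
          _ = U * (M * Uᵀ) + P * (H * P) := by
              simp only [Matrix.mul_add, Matrix.add_mul]
              have e1 : U * Uᵀ * (H * (U * Uᵀ)) = U * (M * Uᵀ) := by
                rw [Matrix.mul_assoc U Uᵀ _, ← Matrix.mul_assoc Uᵀ H _,
                  hUtH, Matrix.mul_assoc M Uᵀ _, ← Matrix.mul_assoc Uᵀ U Uᵀ, hU, Matrix.one_mul,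
                  ← Matrix.mul_assoc]
              have e2 : U * Uᵀ * (H * P) = 0 := by
                rw [Matrix.mul_assoc U Uᵀ _, ← Matrix.mul_assoc Uᵀ H P, hUtH,
                  Matrix.mul_assoc M Uᵀ P, hUP, Matrix.mul_zero, Matrix.mul_zero]
              have e3 : P * (H * (U * Uᵀ)) = 0 := by
                rw [← Matrix.mul_assoc H U Uᵀ, hHU, Matrix.mul_assoc U M Uᵀ,
                  ← Matrix.mul_assoc P U _, hPU, Matrix.zero_mul]
              rw [e1, e2, e3, add_zero, zero_add]
      -- split the trace of V₀ᵀ H V₀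
      have hsplit : (V₀ᵀ * H * V₀).trace
          = (Aᵀ * (M * A)).trace + ((V₀ᵀ * (T * V₀)).trace + μ * (V₀ᵀ * (P * V₀)).trace) := by
        rw [Matrix.mul_assoc, hdecomp]
        simp only [Matrix.add_mul, Matrix.mul_add, trace_add]
        congr 2
        · rw [show U * (M * Uᵀ) * V₀ = U * (M * (Uᵀ * V₀)) by
            simp only [Matrix.mul_assoc], ← hA, ← Matrix.mul_assoc V₀ᵀ U (M * A), hVA,
            Matrix.mul_assoc]
        · rw [Matrix.smul_mul, Matrix.mul_smul, trace_smul, smul_eq_mul]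
      have h2 : 0 ≤ (V₀ᵀ * (T * V₀)).trace := by
        apply psd_trace_nonneg
        rw [← Matrix.mul_assoc, show V₀ᵀ = V₀ᴴ from (conjTranspose_eq_transpose_of_trivial V₀).symm]
        exact hTpsd.conjTranspose_mul_mul_same V₀
      have h3 : V₀ᵀ * (P * V₀) = 1 - Aᵀ * A := by
        rw [hP, Matrix.sub_mul, Matrix.one_mul, Matrix.mul_sub, hV₀,
          Matrix.mul_assoc U Uᵀ V₀, ← hA, ← Matrix.mul_assoc V₀ᵀ U A, hVA]
      have hPpsd : P.PosSemidef := by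
        have hps := Matrix.posSemidef_conjTranspose_mul_self P
        rwa [conjTranspose_eq_transpose_of_trivial, hPt, hPP] at hps
      have h4 : ((1 : Matrix (Fin r) (Fin r) ℝ) - Aᵀ * A).PosSemidef := by
        rw [← h3, ← Matrix.mul_assoc,
          show V₀ᵀ = V₀ᴴ from (conjTranspose_eq_transpose_of_trivial V₀).symm]
        exact hPpsd.conjTranspose_mul_mul_same V₀
      have h5 := one_sub_self_mul_transpose_psd A h4
      have h6 : 0 ≤ ((μ • (1 : Matrix (Fin r) (Fin r) ℝ) - M) * (1 - A * Aᵀ)).trace :=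
        psd_trace_mul_nonneg hPSD h5
      have h7 : ((μ • (1 : Matrix (Fin r) (Fin r) ℝ) - M) * (1 - A * Aᵀ)).trace
          = μ * (r : ℝ) - μ * (A * Aᵀ).trace - M.trace + (M * (A * Aᵀ)).trace := by
        simp only [Matrix.sub_mul, Matrix.mul_sub, Matrix.smul_mul, Matrix.one_mul,
          Matrix.mul_one, trace_sub, trace_smul, trace_one, smul_eq_mul, Fintype.card_fin]
        ring
      have h8 : (Aᵀ * (M * A)).trace = (M * (A * Aᵀ)).trace := by
        rw [Matrix.trace_mul_comm, Matrix.mul_assoc]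
      have h9 : (Aᵀ * A).trace = (A * Aᵀ).trace := Matrix.trace_mul_comm _ _
      have h10 : (V₀ᵀ * (P * V₀)).trace = (r : ℝ) - (A * Aᵀ).trace := by
        rw [h3, trace_sub, trace_one, h9]; simp [Fintype.card_fin]
      rw [htr] at hlt
      rw [hsplit, h8, h10] at hlt
      rw [h7] at h6
      linarith
    · -- negative eigenvalue: descent
      have hlam0 : lam ≠ 0 := ne_of_lt hlam
      have hPV : P * V = V := by
        have h1 : V = lam⁻¹ • (T * V) := by
          rw [hTV, smul_smul, inv_mul_cancel₀ hlam0, one_smul]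
        rw [h1, Matrix.mul_smul, ← Matrix.mul_assoc, hPT]
      have hUV : Uᵀ * V = 0 := by
        rw [← hPV, ← Matrix.mul_assoc, hUP, Matrix.zero_mul]
      have hVU : Vᵀ * U = 0 := by
        have : Vᵀ * U = (Uᵀ * V)ᵀ := by rw [transpose_mul, transpose_transpose]
        rw [this, hUV, transpose_zero]
      have hVP : Vᵀ * P = Vᵀ := by
        have : Vᵀ * P = (P * V)ᵀ := by rw [transpose_mul, hPt]
        rw [this, hPV]
      have hγ : Matrix.trace (Vᵀ * (H * (U * C))) = 0 := by
        rw [hHUC, Matrix.mul_smul, ← Matrix.mul_assoc, hVU, Matrix.zero_mul, smul_zero,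
          trace_zero]
      have hβ : Matrix.trace (Vᵀ * (H * V)) = lam + μ := by
        have hTV' : T * V = P * (H * V) - μ • V := by
          rw [hT, Matrix.sub_mul, Matrix.smul_mul, hPV, Matrix.mul_assoc P (H * P) V,
            Matrix.mul_assoc H P V, hPV]
        have h2 : Vᵀ * (H * V) = Vᵀ * (T * V) + μ • (Vᵀ * V) := by
          rw [hTV', Matrix.mul_sub, Matrix.mul_smul, ← Matrix.mul_assoc Vᵀ P _, hVP,
            sub_add_cancel]
        rw [h2, hTV, Matrix.mul_smul, hVV]
        simp [Matrix.trace]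
      apply descent_step H G hH hG U hU C V hCC hVV hUV _ δ hδ
      rw [hγ, hβ, hα]
      exact Or.inr ⟨rfl, by linarith⟩
  · -- K ≠ 0 : first-order descent
    obtain ⟨i, j, hij⟩ : ∃ i j, K i j ≠ 0 := by
      by_contra hc; push_neg at hc
      exact hKz (by ext i j; simp [hc])
    set Ej : Matrix (Fin r) (Fin 1) ℝ := colM (Pi.single j 1) with hEj
    have hEE : Ejᵀ * Ej = 1 := by
      ext a b
      simp [hEj, colM, Matrix.mul_apply, Pi.single_apply, Matrix.one_apply,
        Subsingleton.elim a b]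
    set Kc : Matrix (Fin n) (Fin 1) ℝ := K * Ej with hKc
    have hKcne : Kc ≠ 0 := by
      intro h
      apply hij
      have := congrFun (congrFun h i) 0
      simpa [hKc, hEj, colM, Matrix.mul_apply, Pi.single_apply] using this
    have hKcpos : 0 < (Kcᵀ * Kc).trace := col_norm_pos hKcne
    set ν : ℝ := Real.sqrt ((Kcᵀ * Kc).trace) with hν
    have hνpos : 0 < ν := Real.sqrt_pos.mpr hKcpos
    have hν2 : ν ^ 2 = (Kcᵀ * Kc).trace := Real.sq_sqrt hKcpos.le
    set V : Matrix (Fin n) (Fin 1) ℝ := ν⁻¹ • Kc with hV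
    have hUKc : Uᵀ * Kc = 0 := by
      rw [hKc, ← Matrix.mul_assoc, hUK, Matrix.zero_mul]
    have hUV : Uᵀ * V = 0 := by rw [hV, Matrix.mul_smul, hUKc, smul_zero]
    have hKcKc : Kcᵀ * Kc = ν ^ 2 • (1 : Matrix (Fin 1) (Fin 1) ℝ) := by
      rw [hν2]; exact one_by_one_eq _
    have hVV : Vᵀ * V = 1 := by
      rw [hV, transpose_smul, Matrix.smul_mul, Matrix.mul_smul, hKcKc, smul_smul, smul_smul]
      rw [show ν⁻¹ * ν⁻¹ * ν ^ 2 = 1 by field_simp]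
      rw [one_smul]
    have hVU : Vᵀ * U = 0 := by
      have h0 : Vᵀ * U = (Uᵀ * V)ᵀ := by rw [transpose_mul, transpose_transpose]
      rw [h0, hUV, transpose_zero]
    have hγ : Matrix.trace (Vᵀ * (H * (U * Ej))) = ν := by
      have hHU2 : H * U = K + U * M := by rw [hK, sub_add_cancel]
      have hHUE : H * (U * Ej) = Kc + U * (M * Ej) := by
        rw [← Matrix.mul_assoc H U Ej, hHU2, Matrix.add_mul, Matrix.mul_assoc, ← hKc]
      rw [hHUE, Matrix.mul_add, ← Matrix.mul_assoc Vᵀ U (M * Ej), hVU, Matrix.zero_mul,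
        add_zero, hV, transpose_smul, Matrix.smul_mul,
        hKcKc, smul_smul, trace_smul, trace_one, smul_eq_mul]
      field_simp
      simp
    apply descent_step H G hH hG U hU Ej V hEE hVV hUV _ δ hδ
    rw [hγ]
    exact Or.inl (ne_of_gt hνpos)

/-- Fairness of the fair-PCA minimax solution: if both trace objectives are
nonnegative on the Stiefel manifold with minimum value `0`, then any minimizer
`U_*` of `max{Tr(UᵀH_AU), Tr(UᵀH_BU)}` equalizes the two traces. -/
theorem fairPCA_minimax_equalizes
    (n r : ℕ) (HA HB : Matrix (Fin n) (Fin n) ℝ)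
    (hHA : HA.IsSymm) (hHB : HB.IsSymm)
    (hAnonneg : ∀ U : Matrix (Fin n) (Fin r) ℝ, Uᵀ * U = 1 →
      0 ≤ Matrix.trace (Uᵀ * HA * U))
    (hBnonneg : ∀ U : Matrix (Fin n) (Fin r) ℝ, Uᵀ * U = 1 →
      0 ≤ Matrix.trace (Uᵀ * HB * U))
    (hAmin : ∃ U : Matrix (Fin n) (Fin r) ℝ, Uᵀ * U = 1 ∧
      Matrix.trace (Uᵀ * HA * U) = 0)
    (hBmin : ∃ U : Matrix (Fin n) (Fin r) ℝ, Uᵀ * U = 1 ∧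
      Matrix.trace (Uᵀ * HB * U) = 0)
    (Ustar : Matrix (Fin n) (Fin r) ℝ) (hUstar : Ustarᵀ * Ustar = 1)
    (hopt : ∀ U : Matrix (Fin n) (Fin r) ℝ, Uᵀ * U = 1 →
      max (Matrix.trace (Ustarᵀ * HA * Ustar)) (Matrix.trace (Ustarᵀ * HB * Ustar))
        ≤ max (Matrix.trace (Uᵀ * HA * U)) (Matrix.trace (Uᵀ * HB * U))) :
    Matrix.trace (Ustarᵀ * HA * Ustar) = Matrix.trace (Ustarᵀ * HB * Ustar) := by
  set tA := Matrix.trace (Ustarᵀ * HA * Ustar) with htA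
  set tB := Matrix.trace (Ustarᵀ * HB * Ustar) with htB
  by_contra hne
  rcases lt_or_gt_of_ne hne with h | h
  · -- tA < tB : descend on HB while controlling HA
    have hA0 : 0 ≤ tA := hAnonneg Ustar hUstar
    have hB0 : 0 < tB := lt_of_le_of_lt hA0 h
    obtain ⟨V₀, hV₀, hV₀0⟩ := hBmin
    have hlt : Matrix.trace (V₀ᵀ * HB * V₀) < Matrix.trace (Ustarᵀ * HB * Ustar) := by
      rw [hV₀0]; exact hB0
    obtain ⟨U', hU', h2, h3⟩ := descent HB HA hHB hHA Ustar hUstar V₀ hV₀ hlt (tB - tA)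
      (by linarith)
    have hm := hopt U' hU'
    rw [max_eq_right h.le] at hm
    have : max (Matrix.trace (U'ᵀ * HA * U')) (Matrix.trace (U'ᵀ * HB * U')) < tB :=
      max_lt (by linarith) (by linarith)
    linarith
  · have hB0 : 0 ≤ tB := hBnonneg Ustar hUstar
    have hA0 : 0 < tA := lt_of_le_of_lt hB0 h
    obtain ⟨V₀, hV₀, hV₀0⟩ := hAmin
    have hlt : Matrix.trace (V₀ᵀ * HA * V₀) < Matrix.trace (Ustarᵀ * HA * Ustar) := by
      rw [hV₀0]; exact hA0
    obtain ⟨U', hU', h2, h3⟩ := descent HA HB hHA hHB Ustar hUstar V₀ hV₀ hlt (tA - tB)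
      (by linarith)
    have hm := hopt U' hU'
    rw [max_eq_left h.le] at hm
    have : max (Matrix.trace (U'ᵀ * HA * U')) (Matrix.trace (U'ᵀ * HB * U')) < tA :=
      max_lt (by linarith) (by linarith)
    linarith
end

section
/- For a symmetric matrix H ∈ ℝ^{n×n}, the minimum of Tr(Uᵀ H U) over all U ∈ ℝ^{n×r} with UᵀU = I_r equals the sum of the r smallest eigenvalues of H (Ky Fan's minimum principle). -/
open Matrix BigOperators

lemma kyFan_trace_conj {n r : ℕ} (μ : Fin n → ℝ)
    (V : Matrix (Fin n) (Fin r) ℝ) :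
    Matrix.trace (Vᵀ * Matrix.diagonal μ * V) = ∑ i, μ i * ∑ j, (V i j)^2 := by
  rw [Matrix.trace_mul_cycle]
  simp only [Matrix.trace, Matrix.diag_apply, Matrix.mul_diagonal]
  refine Finset.sum_congr rfl fun i _ => ?_
  simp only [Matrix.mul_apply, Matrix.transpose_apply]
  rw [Finset.mul_sum, Finset.sum_mul]
  refine Finset.sum_congr rfl fun j _ => ?_
  ring

lemma kyFan_sum_castLE {n r : ℕ} (hr : r ≤ n) (f : Fin n → ℝ) :
    ∑ i : Fin n, (if (i:ℕ) < r then f i else 0) = ∑ j : Fin r, f (Fin.castLE hr j) := by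
  have : ∑ j : Fin r, f (Fin.castLE hr j) = ∑ i ∈ Finset.univ.map (Fin.castLEEmb hr), f i := by
    rw [Finset.sum_map]; rfl
  rw [this, ← Finset.sum_filter]
  refine Finset.sum_congr ?_ fun _ _ => rfl
  ext i
  simp only [Finset.mem_filter, Finset.mem_univ, true_and, Finset.mem_map,
    Fin.castLEEmb, Function.Embedding.coeFn_mk]
  constructor
  · intro h; exact ⟨⟨i, h⟩, rfl⟩
  · rintro ⟨j, hj⟩; rw [← hj]; exact j.isLt

/-- Ky Fan's minimum principle: for a real symmetric `H = P diag(μ) Pᵀ` with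
`μ` listed in increasing order and `P` orthogonal, the minimum of `Tr(Uᵀ H U)`
over matrices `U` with orthonormal columns equals the sum of the `r` smallest
eigenvalues of `H`. -/
theorem kyFan_min_principle
    (n r : ℕ) (hr : r ≤ n)
    (H : Matrix (Fin n) (Fin n) ℝ) (hH : H.IsSymm)
    (μ : Fin n → ℝ) (hμ : Monotone μ)
    (P : Matrix (Fin n) (Fin n) ℝ) (hP : Pᵀ * P = 1) (hP' : P * Pᵀ = 1)
    (hdec : H = P * Matrix.diagonal μ * Pᵀ) :
    IsLeast {x : ℝ | ∃ U : Matrix (Fin n) (Fin r) ℝ,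
        Uᵀ * U = 1 ∧ x = Matrix.trace (Uᵀ * H * U)}
      (∑ i : Fin r, μ (Fin.castLE hr i)) := by
  have conj : ∀ U : Matrix (Fin n) (Fin r) ℝ,
      Uᵀ * H * U = (Pᵀ * U)ᵀ * Matrix.diagonal μ * (Pᵀ * U) := by
    intro U
    rw [hdec]
    simp only [Matrix.transpose_mul, Matrix.transpose_transpose, Matrix.mul_assoc]
  constructor
  · -- membership
    refine ⟨P.submatrix id (Fin.castLE hr), ?_, ?_⟩
    · ext j k
      have h1 := congrFun (congrFun hP (Fin.castLE hr j)) (Fin.castLE hr k)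
      simp only [Matrix.mul_apply, Matrix.transpose_apply, Matrix.one_apply] at h1 ⊢
      simp only [Matrix.submatrix_apply, id_eq]
      rw [h1]
      simp [Fin.castLE_inj]
    · have hV : Pᵀ * P.submatrix id (Fin.castLE hr)
          = (1 : Matrix (Fin n) (Fin n) ℝ).submatrix id (Fin.castLE hr) := by
        ext i j
        have h1 := congrFun (congrFun hP i) (Fin.castLE hr j)
        rw [Matrix.submatrix_apply, id_eq]
        simpa [Matrix.mul_apply, Matrix.transpose_apply] using h1
      rw [conj, hV, kyFan_trace_conj]
      simp only [Matrix.submatrix_apply, id_eq, Matrix.one_apply, Finset.mul_sum]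
      rw [Finset.sum_comm]
      simp
  · -- lower bound
    rintro x ⟨U, hU, rfl⟩
    rw [conj, kyFan_trace_conj]
    set V := Pᵀ * U with hVdef
    set s : Fin n → ℝ := fun i => ∑ j, (V i j)^2 with hs
    have hVV : Vᵀ * V = 1 := by
      rw [hVdef, Matrix.transpose_mul, Matrix.transpose_transpose, Matrix.mul_assoc,
        ← Matrix.mul_assoc P, hP', Matrix.one_mul, hU]
    have h0 : ∀ i, 0 ≤ s i := fun i => Finset.sum_nonneg fun j _ => sq_nonneg _
    have hsum : ∑ i, s i = (r : ℝ) := by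
      have : ∑ i : Fin n, s i = ∑ j : Fin r, (Vᵀ * V) j j := by
        rw [Finset.sum_comm]
        refine Finset.sum_congr rfl fun j _ => ?_
        simp [Matrix.mul_apply, Matrix.transpose_apply, pow_two]
      rw [this, hVV]
      simp [Matrix.one_apply]
    have h1 : ∀ i, s i ≤ 1 := by
      intro i
      set Q := V * Vᵀ with hQ
      have hQs : Q i i = s i := by
        simp [hQ, Matrix.mul_apply, Matrix.transpose_apply, hs, pow_two]
      have hQQ : Q * Q = Q := by
        rw [hQ, Matrix.mul_assoc, ← Matrix.mul_assoc Vᵀ, hVV, Matrix.one_mul]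
      have hsym : ∀ a b, Q a b = Q b a := by
        intro a b
        simp [hQ, Matrix.mul_apply, Matrix.transpose_apply, mul_comm]
      have key : s i ^ 2 ≤ s i := by
        have h2 : Q i i = ∑ k, (Q i k)^2 := by
          conv_lhs => rw [← hQQ]
          rw [Matrix.mul_apply]
          refine Finset.sum_congr rfl fun k _ => ?_
          rw [hsym k i, pow_two]
        have h3 : (Q i i)^2 ≤ ∑ k, (Q i k)^2 :=
          Finset.single_le_sum (f := fun k => (Q i k)^2) (fun k _ => sq_nonneg _)
            (Finset.mem_univ i)
        rw [← hQs]
        linarith [h2, h3]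
      nlinarith [h0 i, key]
    -- now the rearrangement inequality
    rcases Nat.eq_zero_or_pos r with hr0 | hr0
    · subst hr0
      simp
    · have hrn : r - 1 < n := lt_of_lt_of_le (Nat.sub_lt hr0 one_pos) hr
      set c := μ ⟨r - 1, hrn⟩ with hc
      set t : Fin n → ℝ := fun i => if (i : ℕ) < r then 1 else 0 with ht
      have hts : ∑ i, t i = (r : ℝ) := by
        rw [ht]
        simp only
        have := kyFan_sum_castLE hr (fun _ => (1 : ℝ))
        rw [show (∑ i : Fin n, if (i:ℕ) < r then (1:ℝ) else 0)
            = ∑ i : Fin n, (if (i:ℕ) < r then (fun _ => (1:ℝ)) i else 0) from rfl, this]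
        simp
      have htarget : ∑ i : Fin r, μ (Fin.castLE hr i) = ∑ i, μ i * t i := by
        rw [← kyFan_sum_castLE hr μ]
        refine Finset.sum_congr rfl fun i _ => ?_
        rw [ht]
        by_cases h : (i : ℕ) < r <;> simp [h]
      have hterm : ∀ i : Fin n, 0 ≤ (μ i - c) * (s i - t i) := by
        intro i
        by_cases h : (i : ℕ) < r
        · have ht1 : t i = 1 := by simp [ht, h]
          have hμc : μ i ≤ c := by
            apply hμ
            rw [Fin.le_def]
            exact Nat.le_sub_one_of_lt h
          rw [ht1]
          nlinarith [h1 i]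
        · have ht0 : t i = 0 := by simp [ht, h]
          have hμc : c ≤ μ i := by
            apply hμ
            rw [Fin.le_def]
            exact le_trans (Nat.sub_le _ _) (Nat.le_of_not_lt h)
          rw [ht0]
          exact mul_nonneg (by linarith) (by linarith [h0 i])
      have hkey : 0 ≤ ∑ i, (μ i - c) * (s i - t i) :=
        Finset.sum_nonneg fun i _ => hterm i
      have hexp : ∑ i, (μ i - c) * (s i - t i)
          = (∑ i, μ i * s i) - (∑ i, μ i * t i) - c * ((∑ i, s i) - (∑ i, t i)) := by
        simp only [sub_mul, mul_sub, Finset.sum_sub_distrib, Finset.mul_sum]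
        ring
      rw [htarget]
      rw [hexp, hsum, hts] at hkey
      linarith
end

section
/- Let H_A, H_B ∈ ℝ^{n×n} be symmetric, W = W_r(H_A,H_B) the joint numerical range (assumed convex and compact), and t_* ∈ [0,1] a maximizer of φ(t) = Σ_{i=1}^r λ_i(t H_A + (1−t)H_B) over [0,1]. Suppose y_* = (Tr(U_*ᵀ H_A U_*), Tr(U_*ᵀ H_B U_*)) ∈ W attains min_{y ∈ W} max{y₁,y₂} for some U_* ∈ 𝕆^{n×r}. Then t_*·y_{*1} + (1−t_*)·y_{*2} = φ(t_*), i.e., Tr(U_*ᵀ (t_* H_A + (1−t_*) H_B) U_*) equals the sum of the r smallest eigenvalues of t_* H_A + (1−t_*) H_B. -/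
open Matrix BigOperators

/-- The eigenvalues of a real symmetric matrix, sorted in increasing order. -/
noncomputable def sortedEigenvalues {n : ℕ} (M : Matrix (Fin n) (Fin n) ℝ)
    (hM : M.IsHermitian) : Fin n → ℝ :=
  hM.eigenvalues ∘ Tuple.sort hM.eigenvalues

lemma comb_isHermitian {n : ℕ} (HA HB : Matrix (Fin n) (Fin n) ℝ)
    (hA : HA.IsHermitian) (hB : HB.IsHermitian) (t : ℝ) :
    (t • HA + (1 - t) • HB).IsHermitian := by
  have hA' : HAᵀ = HA := by
    rw [← Matrix.conjTranspose_eq_transpose_of_trivial]; exact hA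
  have hB' : HBᵀ = HB := by
    rw [← Matrix.conjTranspose_eq_transpose_of_trivial]; exact hB
  unfold Matrix.IsHermitian
  simp [Matrix.conjTranspose_add, Matrix.conjTranspose_smul,
    Matrix.conjTranspose_eq_transpose_of_trivial, hA', hB']

lemma scalar_kyfan {n r : ℕ} (hr : r ≤ n) (e : Fin n → ℝ) (he : Monotone e)
    (u : Fin n → ℝ) (h0 : ∀ i, 0 ≤ u i) (h1 : ∀ i, u i ≤ 1) (hsum : ∑ i, u i = r) :
    ∑ i : Fin r, e (Fin.castLE hr i) ≤ ∑ i, e i * u i := by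
  rcases Nat.eq_zero_or_pos r with hr0 | hrpos
  · subst hr0
    have hz : ∀ i ∈ Finset.univ, u i = 0 := by
      intro i _
      have := (Finset.sum_eq_zero_iff_of_nonneg (fun i _ => h0 i)).mp (by simpa using hsum)
      exact this i (Finset.mem_univ i)
    have : ∀ i ∈ Finset.univ, e i * u i = 0 := fun i _ => by rw [hz i (Finset.mem_univ i), mul_zero]
    simp [Finset.sum_eq_zero this]
  · have hrn : r - 1 < n := lt_of_lt_of_le (Nat.sub_lt hrpos one_pos) hr
    set c : ℝ := e ⟨r - 1, hrn⟩ with hc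
    set F : Finset (Fin n) := Finset.univ.map ⟨Fin.castLE hr, Fin.castLE_injective hr⟩ with hF
    have hcard : F.card = r := by simp [hF]
    have hmemF : ∀ i : Fin n, i ∈ F ↔ (i : ℕ) < r := by
      intro i
      simp only [hF, Finset.mem_map, Finset.mem_univ, true_and, Function.Embedding.coeFn_mk]
      constructor
      · rintro ⟨j, rfl⟩; exact j.isLt
      · intro hi; exact ⟨⟨i, hi⟩, by ext; simp⟩
    have hLHS : ∑ i : Fin r, e (Fin.castLE hr i) = ∑ i ∈ F, e i := by
      rw [hF, Finset.sum_map]; rfl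
    have hle_c : ∀ i ∈ F, e i ≤ c := by
      intro i hi
      apply he
      have : (i : ℕ) < r := (hmemF i).mp hi
      show (i : ℕ) ≤ r - 1
      omega
    have hge_c : ∀ i ∈ Fᶜ, c ≤ e i := by
      intro i hi
      apply he
      have : ¬ (i : ℕ) < r := fun h => (Finset.mem_compl.mp hi) ((hmemF i).mpr h)
      show (r - 1 : ℕ) ≤ (i : ℕ)
      omega
    have h1' : ∑ i, e i * u i = (∑ i, (e i - c) * u i) + c * r := by
      rw [← hsum, Finset.mul_sum, ← Finset.sum_add_distrib]
      exact Finset.sum_congr rfl (fun i _ => by ring)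
    have h2' : ∑ i ∈ F, e i = (∑ i ∈ F, (e i - c)) + c * r := by
      have : ∑ _i ∈ F, c = c * r := by rw [Finset.sum_const, hcard, nsmul_eq_mul, mul_comm]
      rw [Finset.sum_sub_distrib, this]
      ring
    have h3' : ∑ i ∈ F, (e i - c) ≤ ∑ i, (e i - c) * u i := by
      calc ∑ i ∈ F, (e i - c) ≤ ∑ i ∈ F, (e i - c) * u i := by
            apply Finset.sum_le_sum
            intro i hi
            nlinarith [hle_c i hi, h1 i, h0 i]
        _ ≤ (∑ i ∈ F, (e i - c) * u i) + ∑ i ∈ Fᶜ, (e i - c) * u i := by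
            apply le_add_of_nonneg_right
            apply Finset.sum_nonneg
            intro i hi
            exact mul_nonneg (by linarith [hge_c i hi]) (h0 i)
        _ = ∑ i, (e i - c) * u i := Finset.sum_add_sum_compl F _
    rw [hLHS]
    linarith

lemma star_eq_transpose_real {n : ℕ} (Q : Matrix (Fin n) (Fin n) ℝ) : star Q = Qᵀ := by
  rw [Matrix.star_eq_conjTranspose, Matrix.conjTranspose_eq_transpose_of_trivial]

lemma diag_real {n : ℕ} (d : Fin n → ℝ) :
    Matrix.diagonal (RCLike.ofReal ∘ d) = Matrix.diagonal d := rfl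


lemma kyfan_le {n r : ℕ} (hr : r ≤ n) (M : Matrix (Fin n) (Fin n) ℝ) (hM : M.IsHermitian)
    (U : Matrix (Fin n) (Fin r) ℝ) (hU : Uᵀ * U = 1) :
    ∑ i : Fin r, sortedEigenvalues M hM (Fin.castLE hr i) ≤ Matrix.trace (Uᵀ * M * U) := by
  classical
  set Q : Matrix (Fin n) (Fin n) ℝ := (hM.eigenvectorUnitary : Matrix (Fin n) (Fin n) ℝ) with hQ
  set d : Fin n → ℝ := hM.eigenvalues with hd
  have hQ1 : Qᵀ * Q = 1 := by
    rw [← star_eq_transpose_real]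
    exact (Matrix.mem_unitaryGroup_iff').mp (hM.eigenvectorUnitary).2
  have hQ2 : Q * Qᵀ = 1 := by
    rw [← star_eq_transpose_real]
    exact (Matrix.mem_unitaryGroup_iff).mp (hM.eigenvectorUnitary).2
  have hspec : M = Q * Matrix.diagonal d * Qᵀ := by
    rw [← star_eq_transpose_real, ← diag_real]
    exact hM.spectral_theorem
  set V : Matrix (Fin n) (Fin r) ℝ := Qᵀ * U with hV
  have hVV : Vᵀ * V = 1 := by
    rw [hV, Matrix.transpose_mul, Matrix.transpose_transpose, Matrix.mul_assoc,
      ← Matrix.mul_assoc Q, hQ2, Matrix.one_mul, hU]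
  have hUMU : Uᵀ * M * U = Vᵀ * Matrix.diagonal d * V := by
    rw [hspec, hV, Matrix.transpose_mul, Matrix.transpose_transpose]
    simp only [Matrix.mul_assoc]
  set s : Fin n → ℝ := fun k => ∑ j, (V k j) ^ 2 with hs
  have htrace : Matrix.trace (Vᵀ * Matrix.diagonal d * V) = ∑ k, d k * s k := by
    rw [Matrix.trace]
    simp only [Matrix.diag_apply, Matrix.mul_apply, Matrix.transpose_apply,
      Matrix.diagonal_apply, Finset.sum_mul, mul_ite, mul_zero, ite_mul, zero_mul,
      Finset.sum_ite_eq', Finset.mem_univ, if_true]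
    rw [Finset.sum_comm]
    apply Finset.sum_congr rfl
    intro k _
    rw [hs, Finset.mul_sum]
    apply Finset.sum_congr rfl
    intro j _
    ring
  have hs0 : ∀ k, 0 ≤ s k := fun k => Finset.sum_nonneg (fun j _ => sq_nonneg _)
  set P : Matrix (Fin n) (Fin n) ℝ := V * Vᵀ with hP
  have hPkk : ∀ k, P k k = s k := by
    intro k
    simp [hP, Matrix.mul_apply, hs, sq]
  have hPsym : Pᵀ = P := by rw [hP, Matrix.transpose_mul, Matrix.transpose_transpose]
  have hPP : P * P = P := by
    rw [hP, Matrix.mul_assoc, ← Matrix.mul_assoc Vᵀ, hVV, Matrix.one_mul]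
  have hs1 : ∀ k, s k ≤ 1 := by
    intro k
    have h1 : P k k = ∑ j, (P k j) ^ 2 := by
      conv_lhs => rw [← hPP]
      rw [Matrix.mul_apply]
      apply Finset.sum_congr rfl
      intro j _
      rw [sq]
      congr 1
      calc P j k = Pᵀ k j := rfl
        _ = P k j := by rw [hPsym]
    have h2 : (P k k) ^ 2 ≤ ∑ j, (P k j) ^ 2 :=
      Finset.single_le_sum (f := fun j => (P k j) ^ 2) (fun j _ => sq_nonneg _)
        (Finset.mem_univ k)
    have h3 : (P k k) ^ 2 ≤ P k k := by rw [h1] at *; linarith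
    nlinarith [hPkk k, hs0 k, h3]
  have hssum : ∑ k, s k = r := by
    have : ∑ k, s k = Matrix.trace P := by
      rw [Matrix.trace]
      exact (Finset.sum_congr rfl (fun k _ => (hPkk k).symm))
    rw [this, hP, Matrix.trace_mul_comm, hVV]
    simp
  -- apply scalar lemma with σ = sort
  set σ := Tuple.sort d with hσ
  have hmono : Monotone (d ∘ σ) := Tuple.monotone_sort d
  have key := scalar_kyfan hr (d ∘ σ) hmono (s ∘ σ) (fun i => hs0 _) (fun i => hs1 _)
    (by rw [← hssum]; exact Equiv.sum_comp σ s)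
  have hre : ∑ i, (d ∘ σ) i * (s ∘ σ) i = ∑ k, d k * s k :=
    Equiv.sum_comp σ (fun k => d k * s k)
  rw [hUMU, htrace, ← hre]
  exact key

lemma kyfan_exists {n r : ℕ} (hr : r ≤ n) (M : Matrix (Fin n) (Fin n) ℝ)
    (hM : M.IsHermitian) :
    ∃ U : Matrix (Fin n) (Fin r) ℝ, Uᵀ * U = 1 ∧
      Matrix.trace (Uᵀ * M * U) = ∑ i : Fin r, sortedEigenvalues M hM (Fin.castLE hr i) := by
  classical
  set Q : Matrix (Fin n) (Fin n) ℝ := (hM.eigenvectorUnitary : Matrix (Fin n) (Fin n) ℝ) with hQ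
  set d : Fin n → ℝ := hM.eigenvalues with hd
  have hQ1 : Qᵀ * Q = 1 := by
    rw [← star_eq_transpose_real]
    exact (Matrix.mem_unitaryGroup_iff').mp (hM.eigenvectorUnitary).2
  have hkey : Qᵀ * M * Q = Matrix.diagonal d := by
    rw [← star_eq_transpose_real, ← diag_real]
    have h := hM.conjStarAlgAut_star_eigenvectorUnitary
    rw [Unitary.conjStarAlgAut_star_apply] at h
    exact h
  set σ := Tuple.sort d with hσ
  set p : Fin r → Fin n := fun j => σ (Fin.castLE hr j) with hp
  have hpinj : Function.Injective p := fun a b hab => by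
    have := σ.injective hab
    exact Fin.castLE_injective hr this
  refine ⟨Q.submatrix id p, ?_, ?_⟩
  · ext j k
    have h1 : ∀ a b : Fin n, (Qᵀ * Q) a b = (1 : Matrix (Fin n) (Fin n) ℝ) a b := fun a b => by
      rw [hQ1]
    have h2 := h1 (p j) (p k)
    simp only [Matrix.mul_apply, Matrix.transpose_apply, Matrix.submatrix_apply, id_eq] at h2 ⊢
    rw [h2, Matrix.one_apply, Matrix.one_apply]
    by_cases hjk : j = k
    · simp [hjk]
    · rw [if_neg hjk, if_neg (fun h => hjk (hpinj h))]
  · have hQMQ : ∀ a b : Fin n, (Qᵀ * M * Q) a b = Matrix.diagonal d a b := fun a b => by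
      rw [hkey]
    rw [Matrix.trace]
    have hdiag : ∀ j : Fin r, ((Q.submatrix id p)ᵀ * M * Q.submatrix id p) j j = d (p j) := by
      intro j
      have h2 := hQMQ (p j) (p j)
      simp only [Matrix.mul_apply, Matrix.transpose_apply, Matrix.submatrix_apply, id_eq,
        Matrix.diagonal_apply_eq] at h2 ⊢
      rw [h2]
    calc ∑ j : Fin r, ((Q.submatrix id p)ᵀ * M * Q.submatrix id p).diag j
        = ∑ j : Fin r, d (p j) := Finset.sum_congr rfl (fun j _ => hdiag j)
      _ = ∑ i : Fin r, sortedEigenvalues M hM (Fin.castLE hr i) := rfl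

/-- If `t_*` maximizes `φ(t) = Σ_{i=1}^r λ_i(t H_A + (1−t) H_B)` over `[0,1]`, and
`y_* = (Tr(U_*ᵀ H_A U_*), Tr(U_*ᵀ H_B U_*))` attains `min_{y ∈ W} max{y₁,y₂}` over the
(convex) joint numerical range `W = W_r(H_A,H_B)`, then
`t_*·y_{*1} + (1−t_*)·y_{*2} = φ(t_*)`, i.e. `Tr(U_*ᵀ H(t_*) U_*)` equals the sum of the
`r` smallest eigenvalues of `H(t_*) = t_* H_A + (1−t_*) H_B`. -/
theorem optimal_trace_eq_sum_smallest_eigenvalues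
    (n r : ℕ) (hr : r ≤ n)
    (HA HB : Matrix (Fin n) (Fin n) ℝ)
    (hA : HA.IsHermitian) (hB : HB.IsHermitian)
    (W : Set (ℝ × ℝ))
    (hW : W = {y : ℝ × ℝ | ∃ U : Matrix (Fin n) (Fin r) ℝ, Uᵀ * U = 1 ∧
      y = (Matrix.trace (Uᵀ * HA * U), Matrix.trace (Uᵀ * HB * U))})
    (hWconv : Convex ℝ W) (hWcomp : IsCompact W)
    (tstar : ℝ) (htstar : tstar ∈ Set.Icc (0 : ℝ) 1)
    (htmax : ∀ t ∈ Set.Icc (0 : ℝ) 1,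
      (∑ i : Fin r, sortedEigenvalues (t • HA + (1 - t) • HB)
          (comb_isHermitian HA HB hA hB t) (Fin.castLE hr i))
        ≤ ∑ i : Fin r, sortedEigenvalues (tstar • HA + (1 - tstar) • HB)
            (comb_isHermitian HA HB hA hB tstar) (Fin.castLE hr i))
    (Ustar : Matrix (Fin n) (Fin r) ℝ) (hUstar : Ustarᵀ * Ustar = 1)
    (hymin : ∀ y ∈ W,
      max (Matrix.trace (Ustarᵀ * HA * Ustar)) (Matrix.trace (Ustarᵀ * HB * Ustar))
        ≤ max y.1 y.2) :
    Matrix.trace (Ustarᵀ * (tstar • HA + (1 - tstar) • HB) * Ustar)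
      = ∑ i : Fin r, sortedEigenvalues (tstar • HA + (1 - tstar) • HB)
          (comb_isHermitian HA HB hA hB tstar) (Fin.castLE hr i) := by
  classical
  set φ : ℝ → ℝ := fun t => ∑ i : Fin r, sortedEigenvalues (t • HA + (1 - t) • HB)
      (comb_isHermitian HA HB hA hB t) (Fin.castLE hr i) with hφ
  set m : ℝ := φ tstar with hm
  set a : ℝ := Matrix.trace (Ustarᵀ * HA * Ustar) with ha
  set b : ℝ := Matrix.trace (Ustarᵀ * HB * Ustar) with hb
  have tracelin : ∀ (t : ℝ) (U : Matrix (Fin n) (Fin r) ℝ),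
      Matrix.trace (Uᵀ * (t • HA + (1 - t) • HB) * U)
        = t * Matrix.trace (Uᵀ * HA * U) + (1 - t) * Matrix.trace (Uᵀ * HB * U) := by
    intro t U
    rw [Matrix.mul_add, Matrix.add_mul, Matrix.mul_smul, Matrix.mul_smul,
      Matrix.smul_mul, Matrix.smul_mul, Matrix.trace_add, Matrix.trace_smul,
      Matrix.trace_smul, smul_eq_mul, smul_eq_mul]
  have hlow : ∀ t : ℝ, ∀ y ∈ W, φ t ≤ t * y.1 + (1 - t) * y.2 := by
    intro t y hy
    rw [hW] at hy
    obtain ⟨U, hU1, hyeq⟩ := hy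
    have hk := kyfan_le hr (t • HA + (1 - t) • HB) (comb_isHermitian HA HB hA hB t) U hU1
    rw [tracelin t U] at hk
    rw [hyeq]
    exact hk
  have hach : ∀ t : ℝ, ∃ y ∈ W, t * y.1 + (1 - t) * y.2 = φ t := by
    intro t
    obtain ⟨U, hU1, hUeq⟩ := kyfan_exists hr (t • HA + (1 - t) • HB)
      (comb_isHermitian HA HB hA hB t)
    refine ⟨(Matrix.trace (Uᵀ * HA * U), Matrix.trace (Uᵀ * HB * U)), ?_, ?_⟩
    · rw [hW]; exact ⟨U, hU1, rfl⟩
    · rw [← tracelin t U] at *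
      exact hUeq
  have hyW : ((a, b) : ℝ × ℝ) ∈ W := by
    rw [hW]; exact ⟨Ustar, hUstar, rfl⟩
  -- key step : max a b ≤ m
  have hmaxle : max a b ≤ m := by
    by_contra hcon
    push_neg at hcon
    have hall : ∀ y ∈ W, m < max y.1 y.2 := fun y hy => lt_of_lt_of_le hcon (hymin y hy)
    set Qset : Set (ℝ × ℝ) := Set.Iic m ×ˢ Set.Iic m with hQset
    have hdisj : Disjoint W Qset := by
      rw [Set.disjoint_left]
      intro y hyW' hyQ
      obtain ⟨hy1, hy2⟩ := hyQ
      have := hall y hyW'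
      have : max y.1 y.2 ≤ m := max_le hy1 hy2
      linarith [hall y hyW']
    obtain ⟨f, u, v, hfW, huv, hfQ⟩ := geometric_hahn_banach_compact_closed hWconv hWcomp
      ((convex_Iic m).prod (convex_Iic m)) (isClosed_Iic.prod isClosed_Iic) hdisj
    set pp : ℝ := f (1, 0) with hpp
    set qq : ℝ := f (0, 1) with hqq
    have hrep : ∀ y : ℝ × ℝ, f y = pp * y.1 + qq * y.2 := by
      intro y
      have hy : y = y.1 • ((1 : ℝ), (0 : ℝ)) + y.2 • ((0 : ℝ), (1 : ℝ)) := by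
        ext <;> simp
      conv_lhs => rw [hy]
      rw [f.map_add, f.map_smul, f.map_smul, smul_eq_mul, smul_eq_mul, ← hpp, ← hqq]
      ring
    have hmmQ : ((m, m) : ℝ × ℝ) ∈ Qset := ⟨le_refl m, le_refl m⟩
    have hfmm : v < pp * m + qq * m := by
      have := hfQ (m, m) hmmQ
      rwa [hrep] at this
    have hp : pp ≤ 0 := by
      by_contra hp0
      push_neg at hp0
      set sX : ℝ := (pp * m + qq * m - v + pp) / pp with hsX
      have hsXv : pp * sX = pp * m + qq * m - v + pp := by
        rw [hsX, mul_div_cancel₀ _ (ne_of_gt hp0)]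
      have hsX0 : 0 ≤ sX := by
        apply div_nonneg _ (le_of_lt hp0)
        linarith
      have hmem : ((m - sX, m) : ℝ × ℝ) ∈ Qset := ⟨by simp; linarith, le_refl m⟩
      have := hfQ (m - sX, m) hmem
      rw [hrep] at this
      simp only at this
      nlinarith
    have hq : qq ≤ 0 := by
      by_contra hq0
      push_neg at hq0
      set sX : ℝ := (pp * m + qq * m - v + qq) / qq with hsX
      have hsXv : qq * sX = pp * m + qq * m - v + qq := by
        rw [hsX, mul_div_cancel₀ _ (ne_of_gt hq0)]
      have hsX0 : 0 ≤ sX := by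
        apply div_nonneg _ (le_of_lt hq0)
        linarith
      have hmem : ((m, m - sX) : ℝ × ℝ) ∈ Qset := ⟨le_refl m, by simp; linarith⟩
      have := hfQ (m, m - sX) hmem
      rw [hrep] at this
      simp only at this
      nlinarith
    have hpq : pp + qq < 0 := by
      rcases lt_or_eq_of_le (add_nonpos hp hq) with h | h
      · exact h
      · exfalso
        have hpp0 : pp = 0 := by linarith
        have hqq0 : qq = 0 := by linarith
        have h1 := hfW (a, b) hyW
        rw [hrep] at h1
        simp only [hpp0, hqq0] at h1 hfmm
        linarith
    obtain ⟨t, ht⟩ : ∃ t : ℝ, t = pp / (pp + qq) := ⟨_, rfl⟩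
    have ht0 : 0 ≤ t := by
      rw [ht, le_div_iff_of_neg hpq]
      linarith
    have ht1 : t ≤ 1 := by
      rw [ht, div_le_iff_of_neg hpq]
      linarith
    obtain ⟨y, hyW', hyφ⟩ := hach t
    have hφle : φ t ≤ m := htmax t ⟨ht0, ht1⟩
    have hfy := hfW y hyW'
    rw [hrep] at hfy
    have hppt : t * (pp + qq) = pp := by
      rw [ht, div_mul_cancel₀ _ (ne_of_lt hpq)]
    have hqqt : (1 - t) * (pp + qq) = qq := by
      have h' : (1 - t) * (pp + qq) = (pp + qq) - t * (pp + qq) := by ring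
      rw [h', hppt]
      ring
    have hcomb : pp * y.1 + qq * y.2 = (pp + qq) * (t * y.1 + (1 - t) * y.2) := by
      linear_combination (-y.1) * hppt + (-y.2) * hqqt
    have hmono : (pp + qq) * m ≤ (pp + qq) * φ t :=
      mul_le_mul_of_nonpos_left hφle (le_of_lt hpq)
    have hrid : pp * m + qq * m = (pp + qq) * m := by ring
    rw [hcomb, hyφ] at hfy
    linarith
  -- conclude
  have h1 : φ tstar ≤ tstar * a + (1 - tstar) * b := hlow tstar (a, b) hyW
  have h2 : tstar * a + (1 - tstar) * b ≤ max a b := by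
    have hma := le_max_left a b
    have hmb := le_max_right a b
    nlinarith [htstar.1, htstar.2]
  rw [tracelin tstar Ustar, ← ha, ← hb]
  have : tstar * a + (1 - tstar) * b = m := le_antisymm (le_trans h2 hmaxle) h1
  rw [this, hm]
end
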